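/- Let A_1, …, A_m be Hermitian positive semidefinite d×d complex matrices and let f(z_1, …, z_m) = det(∑_{i=1}^m z_i A_i), a polynomial with real coefficients in z_1, …, z_m. Then either f is identically zero, or f is real stable: f(z_1, …, z_m) ≠ 0 whenever Im(z_i) > 0 for all i. -/

import Mathlib

open Matrix
open scoped ComplexOrder

/-- The multivariate polynomial `det(∑ i, z i • A i)` in the variables
`z 0, …, z (m-1)`. -/
noncomputable def detSumPoly {d m : ℕ}
    (A : Fin m → Matrix (Fin d) (Fin d) ℂ) : MvPolynomial (Fin m) ℂ :=
  (∑ i : Fin m, (MvPolynomial.X i : MvPolynomial (Fin m) ℂ) •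
    ((A i).map MvPolynomial.C :
      Matrix (Fin d) (Fin d) (MvPolynomial (Fin m) ℂ))).det

lemma eval_detSumPoly {d m : ℕ} (A : Fin m → Matrix (Fin d) (Fin d) ℂ)
    (z : Fin m → ℂ) :
    MvPolynomial.eval z (detSumPoly A) = (∑ i, z i • A i).det := by
  unfold detSumPoly
  rw [RingHom.map_det]
  congr 1
  ext j k
  simp [Matrix.map_apply, Matrix.sum_apply]

lemma sum_smul_mulVec {d m : ℕ} (A : Fin m → Matrix (Fin d) (Fin d) ℂ)
    (z : Fin m → ℂ) (v : Fin d → ℂ) :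
    (∑ i, z i • A i) *ᵥ v = ∑ i, z i • ((A i) *ᵥ v) := by
  funext j
  simp only [Matrix.mulVec, dotProduct, Matrix.sum_apply, Matrix.smul_apply,
    smul_eq_mul, Finset.sum_apply, Pi.smul_apply, Finset.sum_mul]
  rw [Finset.sum_comm]
  exact Finset.sum_congr rfl fun i _ => by
    rw [Finset.mul_sum]
    exact Finset.sum_congr rfl fun k _ => by ring

theorem det_sum_psd_real_stable
    {d m : ℕ} (A : Fin m → Matrix (Fin d) (Fin d) ℂ)
    (hA : ∀ i, (A i).PosSemidef) :
    detSumPoly A = 0 ∨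
    ∀ z : Fin m → ℂ, (∀ i, 0 < (z i).im) →
      MvPolynomial.eval z (detSumPoly A) ≠ 0 := by
  by_cases hker : ∃ v : Fin d → ℂ, v ≠ 0 ∧ ∀ i, (A i) *ᵥ v = 0
  · left
    obtain ⟨v, hv, hAv⟩ := hker
    rw [MvPolynomial.funext_iff (R := ℂ)]
    intro z
    rw [eval_detSumPoly, map_zero]
    rw [← Matrix.exists_mulVec_eq_zero_iff]
    exact ⟨v, hv, by simp [sum_smul_mulVec, hAv]⟩
  · right
    intro z hz h0
    rw [eval_detSumPoly, ← Matrix.exists_mulVec_eq_zero_iff] at h0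
    obtain ⟨v, hv, hMv⟩ := h0
    set c : Fin m → ℂ := fun i => star v ⬝ᵥ (A i) *ᵥ v with hc
    have hcn : ∀ i, 0 ≤ c i := fun i => (hA i).dotProduct_mulVec_nonneg v
    have hcim : ∀ i, (c i).im = 0 := fun i =>
      ((Complex.nonneg_iff).mp (hcn i)).2.symm
    have hcre : ∀ i, 0 ≤ (c i).re := fun i =>
      ((Complex.nonneg_iff).mp (hcn i)).1
    have hsum : ∑ i, z i * c i = 0 := by
      have h : star v ⬝ᵥ (∑ i, z i • A i) *ᵥ v = 0 := by
        rw [hMv, dotProduct_zero]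
      rw [sum_smul_mulVec] at h
      simpa [hc, dotProduct, Finset.mul_sum, Finset.sum_comm (γ := Fin d),
        mul_left_comm, mul_comm, mul_assoc] using h
    have him : ∑ i, (z i).im * (c i).re = 0 := by
      have h := congrArg Complex.im hsum
      rw [Complex.im_sum] at h
      simpa [Complex.mul_im, hcim] using h
    have hre0 : ∀ i ∈ Finset.univ, (z i).im * (c i).re = 0 := by
      rw [← Finset.sum_eq_zero_iff_of_nonneg]
      · exact him
      · exact fun i _ => mul_nonneg (hz i).le (hcre i)
    have hc0 : ∀ i, c i = 0 := by
      intro i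
      have h := hre0 i (Finset.mem_univ i)
      have hre : (c i).re = 0 := by
        rcases mul_eq_zero.mp h with h' | h'
        · exact absurd h' (ne_of_gt (hz i))
        · exact h'
      exact Complex.ext (by simpa using hre) (by simpa using hcim i)
    exact hker ⟨v, hv, fun i => ((hA i).dotProduct_mulVec_zero_iff v).mp (hc0 i)⟩
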